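/- Let v : ℝ^{d_x} → ℝ be three times continuously differentiable, let b : ℝ^{d_x} → ℝ^{d_x}, G : ℝ^{d_x} → ℝ^{d_x × d_u}, and h : ℝ^{d_x} → ℝ^{d_y} be continuously differentiable, let c : ℝ^{d_x} → ℝ be continuously differentiable, let U ∈ ℝ^{d_u} and m ∈ ℝ^{d_y} be fixed vectors, let C ∈ ℝ^{d_x × d_y} be a fixed matrix, let R be a symmetric positive-definite real d_y × d_y matrix, let Σ be a constant symmetric real d_x × d_x matrix, and let γ ∈ ℝ. Write f(x) := b(x) + G(x) U − (1/2) C R⁻¹ (h(x) − m) and ψ := ∇v. If γ v(x) = f(x)ᵀ ∇v(x) + (1/2) Σ : D²v(x) + (1/2)‖U‖² + c(x) for all x ∈ ℝ^{d_x}, then for all x: γ ψ(x) = (D f(x))ᵀ ψ(x) + (D ψ(x)) f(x) + ∇c(x) + (1/2) ∇( ∇·(Σ ψ) )(x). -/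

import Mathlib

open Matrix

/-- `i`-th partial derivative of a scalar function on `ℝⁿ`. -/
noncomputable def pd {n : ℕ} (f : (Fin n → ℝ) → ℝ) (i : Fin n) (x : Fin n → ℝ) : ℝ :=
  fderiv ℝ f x (Pi.single i 1)

/-- Gradient of a scalar function on `ℝⁿ`. -/
noncomputable def gradv {n : ℕ} (f : (Fin n → ℝ) → ℝ) (x : Fin n → ℝ) : Fin n → ℝ :=
  fun i => pd f i x

/-- Hessian matrix entries of a scalar function on `ℝⁿ`. -/
noncomputable def hess {n : ℕ} (f : (Fin n → ℝ) → ℝ) (x : Fin n → ℝ) (i j : Fin n) : ℝ :=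
  pd (fun y => pd f i y) j x

/-- Divergence of a vector field on `ℝⁿ`. -/
noncomputable def divv {n : ℕ} (g : (Fin n → ℝ) → (Fin n → ℝ)) (x : Fin n → ℝ) : ℝ :=
  ∑ i, pd (fun y => g y i) i x

lemma pd_add {n : ℕ} {f g : (Fin n → ℝ) → ℝ} {x : Fin n → ℝ}
    (hf : DifferentiableAt ℝ f x) (hg : DifferentiableAt ℝ g x) (i : Fin n) :
    pd (fun y => f y + g y) i x = pd f i x + pd g i x := by
  simp [pd, fderiv_fun_add hf hg]

lemma pd_mul {n : ℕ} {f g : (Fin n → ℝ) → ℝ} {x : Fin n → ℝ}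
    (hf : DifferentiableAt ℝ f x) (hg : DifferentiableAt ℝ g x) (i : Fin n) :
    pd (fun y => f y * g y) i x = f x * pd g i x + g x * pd f i x := by
  simp [pd, fderiv_fun_mul hf hg]

lemma pd_const_mul {n : ℕ} {g : (Fin n → ℝ) → ℝ} {x : Fin n → ℝ} (a : ℝ)
    (hg : DifferentiableAt ℝ g x) (i : Fin n) :
    pd (fun y => a * g y) i x = a * pd g i x := by
  simp [pd, fderiv_const_mul hg a]

lemma pd_const {n : ℕ} (a : ℝ) (i : Fin n) (x : Fin n → ℝ) :
    pd (fun _ => a) i x = 0 := by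
  simp [pd]

lemma pd_sum {n : ℕ} {κ : Type*} (s : Finset κ) {A : κ → (Fin n → ℝ) → ℝ} {x : Fin n → ℝ}
    (hA : ∀ j ∈ s, DifferentiableAt ℝ (A j) x) (i : Fin n) :
    pd (fun y => ∑ j ∈ s, A j y) i x = ∑ j ∈ s, pd (A j) i x := by
  simp [pd, fderiv_fun_sum hA]

lemma contDiff_pd {n : ℕ} {f : (Fin n → ℝ) → ℝ} {m : WithTop ℕ∞}
    (hf : ContDiff ℝ (m + 1) f) (i : Fin n) : ContDiff ℝ m fun x => pd f i x :=
  (hf.fderiv_right le_rfl).clm_apply contDiff_const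

lemma pd_comm {n : ℕ} {v : (Fin n → ℝ) → ℝ} (hv : ContDiff ℝ 2 v)
    (x : Fin n → ℝ) (i j : Fin n) :
    pd (fun y => pd v j y) i x = pd (fun y => pd v i y) j x := by
  have hsym : IsSymmSndFDerivAt ℝ v x := hv.contDiffAt.isSymmSndFDerivAt (by simp)
  have hdf' : DifferentiableAt ℝ (fderiv ℝ v) x :=
    ((hv.fderiv_right (m := 1) (by norm_num)).differentiable one_ne_zero).differentiableAt
  have h1 : ∀ (a c : Fin n), pd (fun y => pd v a y) c x
      = fderiv ℝ (fderiv ℝ v) x (Pi.single c 1) (Pi.single a 1) := by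
    intro a c
    have he : (fun y => pd v a y) = fun y => fderiv ℝ v y (Pi.single a 1) := rfl
    rw [pd, he, fderiv_clm_apply hdf' (differentiableAt_const _)]
    simp
  rw [h1, h1, hsym]

/-- data-modified stationary HJB correspondence (Remark 1). With the drift
`f = b + G U − (1/2) C R⁻¹ (h − m)`, the stationary HJB equation
`γ v = fᵀ∇v + (1/2)Σ:D²v + (1/2)‖U‖² + c` implies the stationary co-state equation
`γ ψ = (Df)ᵀψ + (Dψ) f + ∇c + (1/2)∇(∇·(Σψ))` for `ψ = ∇v`. -/
theorem stmt_4 (dx du dy : ℕ)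
    (v : (Fin dx → ℝ) → ℝ) (hv : ContDiff ℝ 3 v)
    (b : (Fin dx → ℝ) → (Fin dx → ℝ)) (hb : ContDiff ℝ 1 b)
    (G : (Fin dx → ℝ) → Matrix (Fin dx) (Fin du) ℝ)
    (hG : ∀ i j, ContDiff ℝ 1 fun x => G x i j)
    (h : (Fin dx → ℝ) → (Fin dy → ℝ)) (hh : ContDiff ℝ 1 h)
    (c : (Fin dx → ℝ) → ℝ) (hc : ContDiff ℝ 1 c)
    (U : Fin du → ℝ) (m : Fin dy → ℝ)
    (C : Matrix (Fin dx) (Fin dy) ℝ)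
    (R : Matrix (Fin dy) (Fin dy) ℝ) (hRsymm : R.IsSymm) (hR : R.PosDef)
    (Sig : Matrix (Fin dx) (Fin dx) ℝ) (hSig : Sig.IsSymm)
    (γ : ℝ)
    (f : (Fin dx → ℝ) → (Fin dx → ℝ))
    (hf : ∀ x, f x = b x + (G x).mulVec U - (1 / 2 : ℝ) • (C * R⁻¹).mulVec (h x - m))
    (ψ : (Fin dx → ℝ) → (Fin dx → ℝ)) (hψ : ∀ x, ψ x = gradv v x)
    (hHJB : ∀ x, γ * v x =
      f x ⬝ᵥ gradv v x + (1 / 2) * (∑ i, ∑ j, Sig i j * hess v x i j)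
        + (1 / 2) * (∑ i, (U i) ^ 2) + c x) :
    ∀ x i, γ * ψ x i =
      (∑ j, pd (fun y => f y j) i x * ψ x j)
        + (∑ j, pd (fun y => ψ y i) j x * f x j)
        + pd c i x
        + (1 / 2) * pd (fun y => divv (fun z => Sig.mulVec (ψ z)) y) i x := by
  intro x i
  -- regularity facts
  have hv2 : ContDiff ℝ 2 v := hv.of_le (by norm_num)
  have hψC : ∀ j : Fin dx, ContDiff ℝ 2 fun y => pd v j y := fun j =>
    contDiff_pd (m := 2) (hv.of_le (by norm_num)) j
  have hψd : ∀ j : Fin dx, Differentiable ℝ fun y => pd v j y := fun j =>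
    (hψC j).differentiable (by norm_num)
  have hhessC : ∀ j k : Fin dx, ContDiff ℝ 1 fun y => pd (fun z => pd v j z) k y := fun j k =>
    contDiff_pd (m := 1) ((hψC j).of_le (by norm_num)) k
  have hhessd : ∀ j k : Fin dx, Differentiable ℝ fun y => pd (fun z => pd v j z) k y := fun j k =>
    (hhessC j k).differentiable one_ne_zero
  have hfC : ∀ j, ContDiff ℝ 1 fun y => f y j := by
    intro j
    have hfe : (fun y => f y j) = fun y =>
        b y j + (∑ k, G y j k * U k) - (1 / 2) * (∑ k, (C * R⁻¹) j k * (h y k - m k)) := by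
      funext y
      rw [hf y]
      simp [Matrix.mulVec, dotProduct]
    rw [hfe]
    exact ((contDiff_pi.mp hb j).add (ContDiff.sum fun k _ => (hG j k).mul contDiff_const)).sub
      (contDiff_const.mul (ContDiff.sum fun k _ =>
        contDiff_const.mul ((contDiff_pi.mp hh k).sub contDiff_const)))
  have hfd : ∀ j, Differentiable ℝ fun y => f y j := fun j => (hfC j).differentiable one_ne_zero
  have hψx : ∀ j, ψ x j = pd v j x := fun j => by rw [hψ]; rfl
  have hψfun : (fun y => ψ y i) = fun y => pd v i y := by
    funext y; rw [hψ]; rfl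
  -- the divergence term rewritten
  have hdiv_eq : (fun y => divv (fun z => Sig.mulVec (ψ z)) y)
      = fun y => ∑ a, ∑ k, Sig a k * pd (fun z => pd v k z) a y := by
    funext y
    unfold divv
    apply Finset.sum_congr rfl
    intro a _
    have hg : (fun z => Sig.mulVec (ψ z) a) = fun z => ∑ k, Sig a k * pd v k z := by
      funext z
      simp [Matrix.mulVec, dotProduct, hψ, gradv]
    rw [hg, pd_sum (A := fun k z => Sig a k * pd v k z) Finset.univ
      (fun k _ => ((hψd k) y).const_mul _) a]
    exact Finset.sum_congr rfl fun k _ => pd_const_mul (Sig a k) ((hψd k) y) a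
  have hdivd : DifferentiableAt ℝ (fun y => divv (fun z => Sig.mulVec (ψ z)) y) x := by
    rw [hdiv_eq]
    exact DifferentiableAt.fun_sum fun a _ => DifferentiableAt.fun_sum fun k _ =>
      ((hhessd k a) x).const_mul _
  have hdiv_eq2 : ∀ y, divv (fun z => Sig.mulVec (ψ z)) y = ∑ a, ∑ k, Sig a k * hess v y a k := by
    intro y
    rw [show divv (fun z => Sig.mulVec (ψ z)) y
        = ∑ a, ∑ k, Sig a k * pd (fun z => pd v k z) a y from congrFun hdiv_eq y]
    calc ∑ a, ∑ k, Sig a k * pd (fun z => pd v k z) a y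
        = ∑ a, ∑ k, Sig k a * hess v y k a := by
          refine Finset.sum_congr rfl fun a _ => Finset.sum_congr rfl fun k _ => ?_
          rw [hSig.apply k a]; rfl
      _ = ∑ k, ∑ a, Sig k a * hess v y k a := Finset.sum_comm
  -- the HJB identity as an identity of functions
  set K : ℝ := (1 / 2) * ∑ k, (U k) ^ 2 with hK
  have hkey : (fun y => γ * v y) = fun y =>
      (∑ j, f y j * pd v j y) + (1 / 2) * divv (fun z => Sig.mulVec (ψ z)) y + K + c y := by
    funext y
    rw [hHJB y, hdiv_eq2 y]
    simp [dotProduct, gradv]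
  -- differentiate both sides at x in direction i
  have hstep := congrArg (fun F => pd F i x) hkey
  have hD1 : DifferentiableAt ℝ (fun y => ∑ j, f y j * pd v j y) x :=
    DifferentiableAt.fun_sum fun j _ => ((hfd j) x).mul ((hψd j) x)
  have hD2 : DifferentiableAt ℝ (fun y => (1 / 2) * divv (fun z => Sig.mulVec (ψ z)) y) x :=
    hdivd.const_mul _
  have hL : pd (fun y => γ * v y) i x = γ * ψ x i := by
    rw [pd_const_mul γ ((hv.differentiable (by norm_num)) x) i, hψx i]
  have e1 : pd (fun y =>
        (∑ j, f y j * pd v j y) + (1 / 2) * divv (fun z => Sig.mulVec (ψ z)) y + K + c y) i x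
      = pd (fun y =>
        (∑ j, f y j * pd v j y) + (1 / 2) * divv (fun z => Sig.mulVec (ψ z)) y + K) i x
        + pd c i x :=
    pd_add ((hD1.add hD2).add (differentiableAt_const _)) ((hc.differentiable one_ne_zero) x) i
  have e2 : pd (fun y =>
        (∑ j, f y j * pd v j y) + (1 / 2) * divv (fun z => Sig.mulVec (ψ z)) y + K) i x
      = pd (fun y =>
        (∑ j, f y j * pd v j y) + (1 / 2) * divv (fun z => Sig.mulVec (ψ z)) y) i x
        + pd (fun _ => K) i x :=
    pd_add (hD1.add hD2) (differentiableAt_const _) i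
  have e3 : pd (fun y =>
        (∑ j, f y j * pd v j y) + (1 / 2) * divv (fun z => Sig.mulVec (ψ z)) y) i x
      = pd (fun y => ∑ j, f y j * pd v j y) i x
        + pd (fun y => (1 / 2) * divv (fun z => Sig.mulVec (ψ z)) y) i x :=
    pd_add hD1 hD2 i
  have e4 : pd (fun y => (1 / 2) * divv (fun z => Sig.mulVec (ψ z)) y) i x
      = (1 / 2) * pd (fun y => divv (fun z => Sig.mulVec (ψ z)) y) i x :=
    pd_const_mul _ hdivd i
  have e5 : pd (fun y => ∑ j, f y j * pd v j y) i x
      = ∑ j, (f x j * pd (fun y => ψ y i) j x + pd v j x * pd (fun y => f y j) i x) := by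
    rw [pd_sum (A := fun j y => f y j * pd v j y) Finset.univ
      (fun j _ => ((hfd j) x).mul ((hψd j) x)) i]
    refine Finset.sum_congr rfl fun j _ => ?_
    rw [pd_mul ((hfd j) x) ((hψd j) x) i, pd_comm hv2 x i j, hψfun]
  rw [hL, e1, e2, e3, e4, e5, pd_const] at hstep
  rw [hstep, Finset.sum_add_distrib]
  have s1 : ∑ j, f x j * pd (fun y => ψ y i) j x
      = ∑ j, pd (fun y => ψ y i) j x * f x j :=
    Finset.sum_congr rfl fun j _ => mul_comm _ _
  have s2 : ∑ j, pd v j x * pd (fun y => f y j) i x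
      = ∑ j, pd (fun y => f y j) i x * ψ x j :=
    Finset.sum_congr rfl fun j _ => by rw [hψx j, mul_comm]
  rw [s1, s2]
  ring
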